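/- For β > 1 there exists κ > 0 such that for all m ∈ [-1,1], f_β(m) - f_β(m_β) ≥ κ · min((m - m_β)², (m + m_β)²). -/

import Mathlib

/-- The binary entropy function. -/
noncomputable def binEntropy (m : ℝ) : ℝ :=
  -((1 - m) / 2) * Real.log ((1 - m) / 2) - ((1 + m) / 2) * Real.log ((1 + m) / 2)

/-- The mean-field free energy density. -/
noncomputable def fBeta (β m : ℝ) : ℝ := -m ^ 2 / 2 - binEntropy m / β

noncomputable def psiMF (β m : ℝ) : ℝ :=
  (Real.log ((1 + m) / 2) - Real.log ((1 - m) / 2)) / (2 * β) - m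

lemma hasDerivAt_fBeta {β m : ℝ} (hβ : β ≠ 0) (h1 : -1 < m) (h2 : m < 1) :
    HasDerivAt (fBeta β) (psiMF β m) m := by
  have ha : (0:ℝ) < (1 - m) / 2 := by linarith
  have hb : (0:ℝ) < (1 + m) / 2 := by linarith
  have d1 : HasDerivAt (fun x : ℝ => (1 - x) / 2) (-1 / 2) m :=
    ((hasDerivAt_id m).const_sub 1).div_const 2
  have d2 : HasDerivAt (fun x : ℝ => (1 + x) / 2) (1 / 2) m := by
    simpa using ((hasDerivAt_id m).const_add 1).div_const 2
  have l1 : HasDerivAt (fun x : ℝ => Real.log ((1 - x) / 2)) ((-1/2) / ((1 - m)/2)) m :=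
    d1.log ha.ne'
  have l2 : HasDerivAt (fun x : ℝ => Real.log ((1 + x) / 2)) ((1/2) / ((1 + m)/2)) m :=
    d2.log hb.ne'
  have t1 := (d1.neg.mul l1).sub (d2.mul l2)
  have hbe : HasDerivAt binEntropy
      ((Real.log ((1 - m)/2) - Real.log ((1 + m)/2)) / 2) m := by
    have h1' : (1:ℝ) - m ≠ 0 := by linarith
    have h2' : (1:ℝ) + m ≠ 0 := by linarith
    refine t1.congr_deriv ?_
    simp only [Pi.neg_apply]; field_simp
    ring
  have dsq : HasDerivAt (fun x : ℝ => -x ^ 2 / 2) (-m) m := by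
    have := ((hasDerivAt_pow 2 m).neg).div_const 2
    refine this.congr_deriv ?_
    simp
    ring
  have := dsq.sub (hbe.div_const β)
  refine this.congr_deriv ?_
  unfold psiMF
  field_simp
  ring

lemma hasDerivAt_psiMF {β m : ℝ} (hβ : β ≠ 0) (h1 : -1 < m) (h2 : m < 1) :
    HasDerivAt (psiMF β) ((((1:ℝ) - m)⁻¹ + ((1:ℝ) + m)⁻¹) / (2 * β) - 1) m := by
  have ha : (0:ℝ) < (1 - m) / 2 := by linarith
  have hb : (0:ℝ) < (1 + m) / 2 := by linarith
  have d1 : HasDerivAt (fun x : ℝ => (1 - x) / 2) (-1 / 2) m :=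
    ((hasDerivAt_id m).const_sub 1).div_const 2
  have d2 : HasDerivAt (fun x : ℝ => (1 + x) / 2) (1 / 2) m := by
    simpa using ((hasDerivAt_id m).const_add 1).div_const 2
  have l1 : HasDerivAt (fun x : ℝ => Real.log ((1 - x) / 2)) ((-1/2) / ((1 - m)/2)) m :=
    d1.log ha.ne'
  have l2 : HasDerivAt (fun x : ℝ => Real.log ((1 + x) / 2)) ((1/2) / ((1 + m)/2)) m :=
    d2.log hb.ne'
  have := ((l2.sub l1).div_const (2 * β)).sub (hasDerivAt_id m)
  refine this.congr_deriv ?_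
  have h1' : (1:ℝ) - m ≠ 0 := by linarith
  have h2' : (1:ℝ) + m ≠ 0 := by linarith
  field_simp
  ring

lemma psiMF_zero (β : ℝ) : psiMF β 0 = 0 := by simp [psiMF]

lemma psiMF_fix {β mβ : ℝ} (hβ : 0 < β) (hm0 : 0 < mβ) (hm1 : mβ < 1)
    (hfix : mβ = Real.tanh (β * mβ)) : psiMF β mβ = 0 := by
  set x := β * mβ with hx
  have hu : (0:ℝ) < Real.exp x := Real.exp_pos x
  have hv : (0:ℝ) < Real.exp (-x) := Real.exp_pos (-x)
  have hs : (0:ℝ) < Real.exp x + Real.exp (-x) := by linarith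
  have htanh : mβ = (Real.exp x - Real.exp (-x)) / (Real.exp x + Real.exp (-x)) := by
    rw [hfix, Real.tanh_eq_sinh_div_cosh, Real.sinh_eq, Real.cosh_eq]
    field_simp
  have e1 : (1 + mβ) / 2 = Real.exp x / (Real.exp x + Real.exp (-x)) := by
    rw [htanh]; field_simp; ring
  have e2 : (1 - mβ) / 2 = Real.exp (-x) / (Real.exp x + Real.exp (-x)) := by
    rw [htanh]; field_simp; ring
  have : Real.log ((1 + mβ) / 2) - Real.log ((1 - mβ) / 2) = 2 * x := by
    rw [e1, e2, Real.log_div hu.ne' hs.ne', Real.log_div hv.ne' hs.ne',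
      Real.log_exp, Real.log_exp]
    ring
  unfold psiMF
  rw [this]
  field_simp [hx]
  ring

lemma continuous_fBeta (β : ℝ) : Continuous (fBeta β) := by
  have hbe : Continuous binEntropy := by
    have : binEntropy = fun m =>
        Real.negMulLog ((1 - m) / 2) + Real.negMulLog ((1 + m) / 2) := by
      funext m
      simp [binEntropy, Real.negMulLog]
      ring
    rw [this]
    fun_prop
  unfold fBeta
  fun_prop

lemma strictConvexOn_psiMF {β : ℝ} (hβ : 0 < β) :
    StrictConvexOn ℝ (Set.Ico (0:ℝ) 1) (psiMF β) := by
  apply strictConvexOn_of_deriv2_pos (convex_Ico 0 1)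
  · intro x hx
    exact (hasDerivAt_psiMF hβ.ne' (by linarith [hx.1]) hx.2).continuousAt.continuousWithinAt
  · intro x hx
    rw [interior_Ico] at hx
    obtain ⟨hx0, hx1⟩ := hx
    have hderiv : ∀ y ∈ Set.Ioo (-1:ℝ) 1, deriv (psiMF β) y
        = (((1:ℝ) - y)⁻¹ + ((1:ℝ) + y)⁻¹) / (2 * β) - 1 := fun y hy =>
      (hasDerivAt_psiMF hβ.ne' hy.1 hy.2).deriv
    have hmem : Set.Ioo (-1:ℝ) 1 ∈ nhds x :=
      (isOpen_Ioo).mem_nhds ⟨by linarith, hx1⟩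
    have heq : deriv (psiMF β) =ᶠ[nhds x]
        (fun y => (((1:ℝ) - y)⁻¹ + ((1:ℝ) + y)⁻¹) / (2 * β) - 1) :=
      Filter.eventuallyEq_of_mem hmem hderiv
    have : deriv^[2] (psiMF β) x
        = deriv (fun y => (((1:ℝ) - y)⁻¹ + ((1:ℝ) + y)⁻¹) / (2 * β) - 1) x := by
      show deriv (deriv (psiMF β)) x = _
      exact heq.deriv_eq
    rw [this]
    have h1' : (1:ℝ) - x ≠ 0 := by nlinarith
    have h2' : (1:ℝ) + x ≠ 0 := by nlinarith
    have d1 : HasDerivAt (fun y : ℝ => ((1:ℝ) - y)⁻¹) (((1 - x)^2)⁻¹) x := by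
      have := (((hasDerivAt_id x).const_sub 1).inv h1')
      refine this.congr_deriv ?_
      simp only [id_eq]; field_simp
    have d2 : HasDerivAt (fun y : ℝ => ((1:ℝ) + y)⁻¹) (-((1 + x)^2)⁻¹) x := by
      have := (((hasDerivAt_id x).const_add 1).inv h2')
      refine this.congr_deriv ?_
      simp only [id_eq]; field_simp
    have dd : HasDerivAt (fun y : ℝ => (((1:ℝ) - y)⁻¹ + ((1:ℝ) + y)⁻¹) / (2 * β) - 1) _ x := ((d1.add d2).div_const (2 * β)).sub_const 1
    rw [dd.deriv]
    have hlt : (1 - x)^2 < (1 + x)^2 := by nlinarith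
    have hp : (0:ℝ) < (1 - x)^2 := by positivity
    have hinv : ((1 + x)^2)⁻¹ < ((1 - x)^2)⁻¹ := inv_strictAnti₀ hp hlt
    apply div_pos (by linarith) (by linarith)

/-- Quadratic stability: for β > 1 there is κ > 0 with
f_β(m) - f_β(m_β) ≥ κ min((m-m_β)², (m+m_β)²) for all m ∈ [-1,1]. -/
theorem fBeta_quadratic_stability (β mβ : ℝ) (hβ : 1 < β)
    (hmβ : mβ ∈ Set.Ioo (0 : ℝ) 1) (hfix : mβ = Real.tanh (β * mβ)) :
    ∃ κ > (0 : ℝ), ∀ m ∈ Set.Icc (-1 : ℝ) 1,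
      fBeta β m - fBeta β mβ ≥ κ * min ((m - mβ) ^ 2) ((m + mβ) ^ 2) := by
  obtain ⟨hm0, hm1⟩ := hmβ
  have hβ0 : (0:ℝ) < β := by linarith
  have hψm : psiMF β mβ = 0 := psiMF_fix hβ0 hm0 hm1 hfix
  have hsc := strictConvexOn_psiMF hβ0
  have hconv := hsc.convexOn
  have h0mem : (0:ℝ) ∈ Set.Ico (0:ℝ) 1 := ⟨le_refl _, by norm_num⟩
  have hmmem : mβ ∈ Set.Ico (0:ℝ) 1 := ⟨hm0.le, hm1⟩
  have hamem : mβ/2 ∈ Set.Ico (0:ℝ) 1 := ⟨by linarith, by linarith⟩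
  -- B : strict negativity at midpoint
  have hBneg : psiMF β (mβ/2) < 0 := by
    have h := hsc.2 h0mem hmmem hm0.ne one_half_pos one_half_pos (by norm_num)
    rw [smul_eq_mul, smul_eq_mul, smul_eq_mul, smul_eq_mul,
      show (1/2:ℝ)*0 + 1/2*mβ = mβ/2 from by ring, psiMF_zero, hψm] at h
    linarith
  set B : ℝ := -psiMF β (mβ/2) with hBdef
  have hB : 0 < B := by simp [hBdef]; linarith
  set c : ℝ := 2*B/mβ with hcdef
  have hc : 0 < c := by positivity
  have hcm : c * mβ = 2 * B := by rw [hcdef]; field_simp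
  -- bounds from convexity
  have bound1 : ∀ t, mβ < t → t < 1 → 2*B*(t - mβ) ≤ psiMF β t * mβ := by
    intro t ht1 ht2
    have htmem : t ∈ Set.Ico (0:ℝ) 1 := ⟨by linarith, ht2⟩
    have hs := hconv.slope_mono_adjacent hamem htmem
      (by linarith : mβ/2 < mβ) ht1
    rw [hψm] at hs
    have h1 : (0:ℝ) < mβ - mβ/2 := by linarith
    have h2 : (0:ℝ) < t - mβ := by linarith
    have := (div_le_div_iff₀ h1 h2).mp hs
    rw [hBdef]
    nlinarith
  have bound2 : ∀ t, mβ/2 < t → t < mβ → psiMF β t * mβ ≤ -(2*B*(mβ - t)) := by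
    intro t ht1 ht2
    have htmem : t ∈ Set.Ico (0:ℝ) 1 := ⟨by linarith, by linarith⟩
    have hs := hconv.slope_mono_adjacent hamem hmmem ht1 ht2
    rw [hψm] at hs
    have h1 : (0:ℝ) < t - mβ/2 := by linarith
    have h2 : (0:ℝ) < mβ - t := by linarith
    have := (div_le_div_iff₀ h1 h2).mp hs
    rw [hBdef]
    nlinarith
  have bound3 : ∀ t, 0 ≤ t → t ≤ mβ → psiMF β t ≤ 0 := by
    intro t ht1 ht2
    have htmem : t ∈ Set.Ico (0:ℝ) 1 := ⟨ht1, by linarith⟩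
    have ha : (0:ℝ) ≤ (mβ - t)/mβ := div_nonneg (by linarith) hm0.le
    have hb : (0:ℝ) ≤ t/mβ := by positivity
    have hab : (mβ - t)/mβ + t/mβ = 1 := by field_simp; ring
    have h := hconv.2 h0mem hmmem ha hb hab
    rw [smul_eq_mul, smul_eq_mul, smul_eq_mul, smul_eq_mul, mul_zero, zero_add,
      div_mul_cancel₀ t hm0.ne', psiMF_zero, hψm] at h
    linarith
  -- the comparison function
  set φ : ℝ → ℝ := fun m => fBeta β m - c/2 * (m - mβ)^2 with hφdef
  have hφd : ∀ x, -1 < x → x < 1 → HasDerivAt φ (psiMF β x - c * (x - mβ)) x := by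
    intro x hx1 hx2
    have d := (hasDerivAt_fBeta hβ0.ne' hx1 hx2).sub
      ((((hasDerivAt_id x).sub_const mβ).pow 2).const_mul (c/2))
    refine d.congr_deriv ?_
    simp only [id_eq, pow_one, Nat.cast_ofNat, mul_one]
    ring
  have hφcont : Continuous φ := by
    exact (continuous_fBeta β).sub
      (continuous_const.mul ((continuous_id.sub continuous_const).pow 2))
  -- Zone R : [mβ, 1]
  have MonR : MonotoneOn φ (Set.Icc mβ 1) := by
    apply monotoneOn_of_deriv_nonneg (convex_Icc _ _) hφcont.continuousOn
    · intro x hx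
      rw [interior_Icc] at hx
      exact (hφd x (by linarith [hx.1]) hx.2).differentiableAt.differentiableWithinAt
    · intro x hx
      rw [interior_Icc] at hx
      rw [(hφd x (by linarith [hx.1]) hx.2).deriv]
      have hb1 := bound1 x hx.1 hx.2
      have hcx : c * (x - mβ) * mβ = 2 * B * (x - mβ) := by
        rw [show c * (x - mβ) * mβ = c * mβ * (x - mβ) from by ring, hcm]
      nlinarith [hb1, hcx, hm0]
  -- Zone M : [mβ/2, mβ]
  have AntM : AntitoneOn φ (Set.Icc (mβ/2) mβ) := by
    apply antitoneOn_of_deriv_nonpos (convex_Icc _ _) hφcont.continuousOn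
    · intro x hx
      rw [interior_Icc] at hx
      exact (hφd x (by linarith [hx.1]) (by linarith [hx.2])).differentiableAt.differentiableWithinAt
    · intro x hx
      rw [interior_Icc] at hx
      rw [(hφd x (by linarith [hx.1]) (by linarith [hx.2])).deriv]
      have hb2 := bound2 x hx.1 hx.2
      have hcx : c * (mβ - x) * mβ = 2 * B * (mβ - x) := by
        rw [show c * (mβ - x) * mβ = c * mβ * (mβ - x) from by ring, hcm]
      nlinarith [hb2, hcx, hm0]
  -- Zone L : [0, mβ/2]
  have AntL : AntitoneOn (fBeta β) (Set.Icc 0 (mβ/2)) := by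
    apply antitoneOn_of_deriv_nonpos (convex_Icc _ _) (continuous_fBeta β).continuousOn
    · intro x hx
      rw [interior_Icc] at hx
      exact (hasDerivAt_fBeta hβ0.ne' (by linarith [hx.1])
        (by linarith [hx.2])).differentiableAt.differentiableWithinAt
    · intro x hx
      rw [interior_Icc] at hx
      rw [(hasDerivAt_fBeta hβ0.ne' (by linarith [hx.1]) (by linarith [hx.2])).deriv]
      exact bound3 x hx.1.le (by linarith [hx.2])
  have hφm : φ mβ = fBeta β mβ := by simp [hφdef]
  -- key estimate on [0,1]
  have key : ∀ m ∈ Set.Icc (0:ℝ) 1, fBeta β m - fBeta β mβ ≥ c/8 * (m - mβ)^2 := by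
    intro m hm
    rcases le_total mβ m with h | h
    · have := MonR ⟨le_refl _, hm1.le⟩ ⟨h, hm.2⟩ h
      rw [hφm] at this
      simp only [hφdef] at this
      nlinarith [sq_nonneg (m - mβ)]
    · rcases le_total (mβ/2) m with h' | h'
      · have := AntM ⟨h', h⟩ ⟨by linarith, le_refl _⟩ h
        rw [hφm] at this
        simp only [hφdef] at this
        nlinarith [sq_nonneg (m - mβ)]
      · have h1 := AntL ⟨hm.1, h'⟩ ⟨by positivity, le_refl _⟩ h'
        have h2 := AntM ⟨le_refl _, by linarith⟩ ⟨by linarith, le_refl _⟩ (by linarith)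
        rw [hφm] at h2
        simp only [hφdef] at h2
        have hsq : (m - mβ)^2 ≤ mβ^2 := by
          nlinarith [mul_nonneg hm.1 (show (0:ℝ) ≤ 2*mβ - m by linarith)]
        nlinarith
  -- symmetry
  have heven : ∀ x : ℝ, fBeta β (-x) = fBeta β x := by
    intro x
    unfold fBeta binEntropy
    rw [show (1 - -x) = 1 + x from by ring, show (1 + -x) = 1 - x from by ring]
    ring
  refine ⟨c/8, by positivity, ?_⟩
  intro m hm
  rcases le_total 0 m with h | h
  · have hk := key m ⟨h, hm.2⟩
    have hmin : min ((m - mβ)^2) ((m + mβ)^2) = (m - mβ)^2 :=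
      min_eq_left (by nlinarith)
    rw [hmin]
    exact hk
  · have hk := key (-m) ⟨by linarith, by linarith [hm.1]⟩
    rw [heven, show (-m - mβ)^2 = (m + mβ)^2 from by ring] at hk
    have : c/8 * min ((m - mβ)^2) ((m + mβ)^2) ≤ c/8 * (m + mβ)^2 :=
      mul_le_mul_of_nonneg_left (min_le_right _ _) (by positivity)
    linarith
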